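/- Let d ≥ 1, μ > 0, t > 0, and let f : ℝ^d → ℝ be continuously differentiable and μ-strongly convex, i.e. (μ/2)‖x − y‖² ≤ f(x) − f(y) − ⟨∇f(y), x − y⟩ for all x, y ∈ ℝ^d. Then the smoothed function f_t is also μ-strongly convex: (μ/2)‖x − y‖² ≤ f_t(x) − f_t(y) − ⟨∇f_t(y), x − y⟩ for all x, y ∈ ℝ^d. -/

import Mathlib

open MeasureTheory RealInnerProductSpace

/-- The smoothed function `f_t(x) = 𝔼_r [f (x + t r)]`, where `r` is uniform on the closed
unit ball of `ℝ^d`. -/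
noncomputable def smoothedFn {d : ℕ} (t : ℝ) (f : EuclideanSpace ℝ (Fin d) → ℝ)
    (x : EuclideanSpace ℝ (Fin d)) : ℝ :=
  ⨍ r in Metric.closedBall (0 : EuclideanSpace ℝ (Fin d)) 1, f (x + t • r)

theorem smoothed_strongly_convex {d : ℕ} (hd : 1 ≤ d) (μ t : ℝ) (hμ : 0 < μ) (ht : 0 < t)
    (f : EuclideanSpace ℝ (Fin d) → ℝ)
    (hC1 : ContDiff ℝ 1 f)
    (hsc : ∀ x y : EuclideanSpace ℝ (Fin d),
      μ / 2 * ‖x - y‖ ^ 2 ≤ f x - f y - ⟪gradient f y, x - y⟫) :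
    Differentiable ℝ (smoothedFn t f) ∧
      ∀ x y : EuclideanSpace ℝ (Fin d),
        μ / 2 * ‖x - y‖ ^ 2 ≤
          smoothedFn t f x - smoothedFn t f y - ⟪gradient (smoothedFn t f) y, x - y⟫ := by
  have hf : Differentiable ℝ f := hC1.differentiable one_ne_zero
  have hf' : Continuous (fderiv ℝ f) := hC1.continuous_fderiv one_ne_zero
  set D := Metric.closedBall (0 : EuclideanSpace ℝ (Fin d)) 1 with hD
  have hDc : IsCompact D := isCompact_closedBall _ _
  have hDm : MeasurableSet D := measurableSet_closedBall
  have hDpos : 0 < volume D := Metric.measure_closedBall_pos _ _ one_pos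
  have hDlt : volume D < ⊤ := measure_closedBall_lt_top
  have hcT : 0 < (volume D).toReal := ENNReal.toReal_pos hDpos.ne' hDlt.ne
  set c : ℝ := (volume D).toReal⁻¹ with hc
  have hcpos : 0 < c := inv_pos.mpr hcT
  -- integrability of f (x + t • r)
  have hcont : ∀ x : EuclideanSpace ℝ (Fin d),
      Continuous (fun r : EuclideanSpace ℝ (Fin d) => x + t • r) := fun x =>
    continuous_const.add (continuous_id.const_smul t)
  have hint : ∀ x : EuclideanSpace ℝ (Fin d),
      IntegrableOn (fun r => f (x + t • r)) D volume := fun x =>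
    ((hC1.continuous.comp (hcont x)).continuousOn).integrableOn_compact hDc
  have hint' : ∀ x : EuclideanSpace ℝ (Fin d),
      IntegrableOn (fun r => fderiv ℝ f (x + t • r)) D volume := fun x =>
    ((hf'.comp (hcont x)).continuousOn).integrableOn_compact hDc
  -- derivative of the integral
  have key : ∀ x : EuclideanSpace ℝ (Fin d),
      HasFDerivAt (fun z => ∫ r in D, f (z + t • r))
        (∫ r in D, fderiv ℝ f (x + t • r)) x := by
    intro x
    obtain ⟨C, hC⟩ := (isCompact_closedBall x (1 + |t|)).exists_bound_of_continuousOn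
        hf'.continuousOn
    have hmem : ∀ z ∈ Metric.ball x 1, ∀ r ∈ D, z + t • r ∈ Metric.closedBall x (1 + |t|) := by
      intro z hz r hr
      rw [Metric.mem_closedBall]
      calc dist (z + t • r) x ≤ dist (z + t • r) z + dist z x := dist_triangle _ _ _
        _ ≤ |t| + 1 := by
            refine add_le_add ?_ (le_of_lt (Metric.mem_ball.mp hz))
            rw [dist_eq_norm, add_sub_cancel_left, norm_smul, Real.norm_eq_abs]
            have : ‖r‖ ≤ 1 := by simpa using Metric.mem_closedBall.mp hr
            calc |t| * ‖r‖ ≤ |t| * 1 := by nlinarith [abs_nonneg t]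
              _ = |t| := mul_one _
        _ = 1 + |t| := by ring
    haveI : IsFiniteMeasure (volume.restrict D) :=
      ⟨by rw [Measure.restrict_apply_univ]; exact hDlt⟩
    refine hasFDerivAt_integral_of_dominated_of_fderiv_le (s := Metric.ball x 1)
      (F := fun z r => f (z + t • r)) (F' := fun z r => fderiv ℝ f (z + t • r))
      (bound := fun _ => C) (Metric.ball_mem_nhds x one_pos)
      (Filter.Eventually.of_forall fun z =>
        ((hC1.continuous.comp (hcont z)).aestronglyMeasurable)) (hint x)
      ((hf'.comp (hcont x)).aestronglyMeasurable) ?_ (integrable_const C) ?_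
    · refine (ae_restrict_mem hDm).mono fun r hr z hz => ?_
      exact hC _ (hmem z hz r hr)
    · refine (ae_restrict_mem hDm).mono fun r hr z hz => ?_
      have h1 : HasFDerivAt (fun w : EuclideanSpace ℝ (Fin d) => w + t • r)
          (ContinuousLinearMap.id ℝ _) z := (hasFDerivAt_id z).add_const (t • r)
      simpa [Function.comp_def] using (hf (z + t • r)).hasFDerivAt.comp z h1
  -- rewrite smoothedFn
  have heq : smoothedFn t f = fun x => c • ∫ r in D, f (x + t • r) := by
    funext x
    rw [smoothedFn, setAverage_eq]
    rfl
  have hsm : ∀ x : EuclideanSpace ℝ (Fin d),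
      HasFDerivAt (smoothedFn t f) (c • ∫ r in D, fderiv ℝ f (x + t • r)) x := by
    intro x
    rw [heq]
    exact (key x).const_smul c
  refine ⟨fun x => (hsm x).differentiableAt, fun x y => ?_⟩
  have hgrad : ⟪gradient (smoothedFn t f) y, x - y⟫
      = c * ∫ r in D, (fderiv ℝ f (y + t • r)) (x - y) := by
    rw [gradient, InnerProductSpace.toDual_symm_apply, (hsm y).fderiv]
    rw [ContinuousLinearMap.smul_apply, ContinuousLinearMap.integral_apply (hint' y)]
    simp [smul_eq_mul]
  have happly : IntegrableOn (fun r => (fderiv ℝ f (y + t • r)) (x - y)) D volume := by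
    have : Continuous fun r : EuclideanSpace ℝ (Fin d) => (fderiv ℝ f (y + t • r)) (x - y) :=
      ((hf'.comp (hcont y)).clm_apply continuous_const)
    exact this.continuousOn.integrableOn_compact hDc
  have hpt : ∀ r ∈ D, μ / 2 * ‖x - y‖ ^ 2
      ≤ f (x + t • r) - f (y + t • r) - (fderiv ℝ f (y + t • r)) (x - y) := by
    intro r hr
    have := hsc (x + t • r) (y + t • r)
    have hxy : (x + t • r) - (y + t • r) = x - y := by abel
    rw [hxy] at this
    rwa [gradient, InnerProductSpace.toDual_symm_apply] at this
  have hRHS : smoothedFn t f x - smoothedFn t f y - ⟪gradient (smoothedFn t f) y, x - y⟫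
      = c * ∫ r in D, (f (x + t • r) - f (y + t • r) - (fderiv ℝ f (y + t • r)) (x - y)) := by
    rw [hgrad, heq]
    simp only [smul_eq_mul]
    have hI1 : IntegrableOn (fun r => f (x + t • r) - f (y + t • r)) D volume :=
      (hint x).sub (hint y)
    rw [integral_sub hI1 happly, integral_sub (hint x) (hint y)]
    ring
  rw [hRHS]
  have hmono : ∫ r in D, (μ / 2 * ‖x - y‖ ^ 2 : ℝ)
      ≤ ∫ r in D, (f (x + t • r) - f (y + t • r) - (fderiv ℝ f (y + t • r)) (x - y)) := by
    have hI1 : IntegrableOn (fun r => f (x + t • r) - f (y + t • r)) D volume :=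
      (hint x).sub (hint y)
    have hI2 : IntegrableOn
        (fun r => f (x + t • r) - f (y + t • r) - (fderiv ℝ f (y + t • r)) (x - y)) D volume :=
      hI1.sub happly
    refine setIntegral_mono_on ?_ hI2 hDm hpt
    haveI : IsFiniteMeasure (volume.restrict D) :=
      ⟨by rw [Measure.restrict_apply_univ]; exact hDlt⟩
    exact integrable_const _
  calc μ / 2 * ‖x - y‖ ^ 2 = c * ∫ r in D, (μ / 2 * ‖x - y‖ ^ 2 : ℝ) := by
        rw [setIntegral_const, smul_eq_mul, ← mul_assoc, hc, measureReal_def, inv_mul_cancel₀ hcT.ne', one_mul]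
    _ ≤ _ := by
        exact mul_le_mul_of_nonneg_left hmono hcpos.le
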